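/- arXiv:1406.1262 — 5 statements merged into one kernel-verified Lean document; each statement's English description precedes it below -/
import Mathlib

section
/- The quotient of GL₂(ℤ/3ℤ) by the normal subgroup N := { [[x,-y],[y,x]] : x²+y² ≡ 1 mod 3 } ∪ { [[x,y],[y,-x]] : x²+y² ≡ -1 mod 3 } is isomorphic to GL₂(ℤ/2ℤ). -/
open Matrix
set_option maxRecDepth 100000

def P (A : Matrix (Fin 2) (Fin 2) (ZMod 3)) : Prop :=
  (∃ x y : ZMod 3, x ^ 2 + y ^ 2 = 1 ∧ A = !![x, -y; y, x]) ∨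
  (∃ x y : ZMod 3, x ^ 2 + y ^ 2 = -1 ∧ A = !![x, y; y, -x])

instance : DecidablePred P := fun A => by unfold P; infer_instance

def s1 : GL (Fin 2) (ZMod 3) := ⟨!![1,0;0,1], !![1,0;0,1], by decide, by decide⟩
def s2 : GL (Fin 2) (ZMod 3) := ⟨!![0,1;1,0], !![0,1;1,0], by decide, by decide⟩
def s3 : GL (Fin 2) (ZMod 3) := ⟨!![0,1;2,2], !![2,2;1,0], by decide, by decide⟩
def s4 : GL (Fin 2) (ZMod 3) := ⟨!![1,0;2,2], !![1,0;2,2], by decide, by decide⟩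
def s5 : GL (Fin 2) (ZMod 3) := ⟨!![2,2;0,1], !![2,2;0,1], by decide, by decide⟩
def s6 : GL (Fin 2) (ZMod 3) := ⟨!![2,2;1,0], !![0,1;2,2], by decide, by decide⟩

def k1 : GL (Fin 2) (ZMod 2) := ⟨!![1,0;0,1], !![1,0;0,1], by decide, by decide⟩
def k2 : GL (Fin 2) (ZMod 2) := ⟨!![0,1;1,0], !![0,1;1,0], by decide, by decide⟩
def k3 : GL (Fin 2) (ZMod 2) := ⟨!![0,1;1,1], !![1,1;1,0], by decide, by decide⟩
def k4 : GL (Fin 2) (ZMod 2) := ⟨!![1,0;1,1], !![1,0;1,1], by decide, by decide⟩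
def k5 : GL (Fin 2) (ZMod 2) := ⟨!![1,1;0,1], !![1,1;0,1], by decide, by decide⟩
def k6 : GL (Fin 2) (ZMod 2) := ⟨!![1,1;1,0], !![0,1;1,1], by decide, by decide⟩

def T (k : GL (Fin 2) (ZMod 2)) : GL (Fin 2) (ZMod 3) :=
  if k.val = !![1,0;0,1] then s1
  else if k.val = !![0,1;1,0] then s2
  else if k.val = !![0,1;1,1] then s3
  else if k.val = !![1,0;1,1] then s4
  else if k.val = !![1,1;0,1] then s5
  else s6

lemma hT1 : T 1 = 1 := by decide

lemma hTmul : ∀ k l : GL (Fin 2) (ZMod 2), T (k * l) = T k * T l := by decide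

lemma huni : ∀ k l : GL (Fin 2) (ZMod 2), P (((T k)⁻¹ * T l).val) → k = l := by decide

lemma hTk : ((T k1)⁻¹).val = !![1,0;0,1] ∧ ((T k2)⁻¹).val = !![0,1;1,0] ∧
    ((T k3)⁻¹).val = !![2,2;1,0] ∧ ((T k4)⁻¹).val = !![1,0;2,2] ∧
    ((T k5)⁻¹).val = !![2,2;0,1] ∧ ((T k6)⁻¹).val = !![0,1;2,2] := by decide

set_option maxHeartbeats 2000000 in
lemma hex' : ∀ A : Matrix (Fin 2) (Fin 2) (ZMod 3), A.det ≠ 0 →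
    P (!![1,0;0,1] * A) ∨ P (!![0,1;1,0] * A) ∨ P (!![2,2;1,0] * A) ∨
    P (!![1,0;2,2] * A) ∨ P (!![2,2;0,1] * A) ∨ P (!![0,1;2,2] * A) := by decide

def Nset : Set (GL (Fin 2) (ZMod 3)) :=
  {g | (∃ x y : ZMod 3, x ^ 2 + y ^ 2 = 1 ∧ (g : Matrix (Fin 2) (Fin 2) (ZMod 3)) = !![x, -y; y, x]) ∨
       (∃ x y : ZMod 3, x ^ 2 + y ^ 2 = -1 ∧ (g : Matrix (Fin 2) (Fin 2) (ZMod 3)) = !![x, y; y, -x])}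


theorem quotient_by_Nset_iso_GL2_ZMod2 (H : Subgroup (GL (Fin 2) (ZMod 3))) [H.Normal]
    (hH : (H : Set (GL (Fin 2) (ZMod 3))) = Nset) :
    Nonempty ((GL (Fin 2) (ZMod 3) ⧸ H) ≃* GL (Fin 2) (ZMod 2)) := by
  classical
  have key : ∀ u : GL (Fin 2) (ZMod 3), u ∈ H ↔ P u.val := by
    intro u
    rw [← SetLike.mem_coe, hH]
    exact Iff.rfl
  -- existence of coset representative
  have hex : ∀ g : GL (Fin 2) (ZMod 3), ∃ k : GL (Fin 2) (ZMod 2), (T k)⁻¹ * g ∈ H := by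
    intro g
    have hdet : g.val.det ≠ 0 := by
      have : IsUnit g.val.det := (Matrix.isUnit_iff_isUnit_det _).mp ⟨g, rfl⟩
      exact this.ne_zero
    obtain ⟨h1, h2, h3, h4, h5, h6⟩ := hTk
    rcases hex' g.val hdet with h | h | h | h | h | h
    · exact ⟨k1, (key _).mpr (by rw [Units.val_mul, h1]; exact h)⟩
    · exact ⟨k2, (key _).mpr (by rw [Units.val_mul, h2]; exact h)⟩
    · exact ⟨k3, (key _).mpr (by rw [Units.val_mul, h3]; exact h)⟩
    · exact ⟨k4, (key _).mpr (by rw [Units.val_mul, h4]; exact h)⟩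
    · exact ⟨k5, (key _).mpr (by rw [Units.val_mul, h5]; exact h)⟩
    · exact ⟨k6, (key _).mpr (by rw [Units.val_mul, h6]; exact h)⟩
  have huniq : ∀ (g : GL (Fin 2) (ZMod 3)) (k l : GL (Fin 2) (ZMod 2)),
      (T k)⁻¹ * g ∈ H → (T l)⁻¹ * g ∈ H → k = l := by
    intro g k l hk hl
    have : ((T k)⁻¹ * g) * ((T l)⁻¹ * g)⁻¹ ∈ H := H.mul_mem hk (H.inv_mem hl)
    have h2 : (T k)⁻¹ * T l ∈ H := by
      have e : ((T k)⁻¹ * g) * ((T l)⁻¹ * g)⁻¹ = (T k)⁻¹ * T l := by group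
      rwa [e] at this
    exact huni k l ((key _).mp h2)
  -- define the quotient map
  let f : GL (Fin 2) (ZMod 3) → GL (Fin 2) (ZMod 2) := fun g => (hex g).choose
  have hf : ∀ g, (T (f g))⁻¹ * g ∈ H := fun g => (hex g).choose_spec
  have hmul : ∀ a b, f (a * b) = f a * f b := by
    intro a b
    refine huniq (a * b) (f (a * b)) (f a * f b) (hf (a * b)) ?_
    have na := hf a
    have nb := hf b
    have e : (T (f a * f b))⁻¹ * (a * b) =
        ((T (f b))⁻¹ * ((T (f a))⁻¹ * a) * T (f b)) * ((T (f b))⁻¹ * b) := by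
      rw [hTmul]; group
    rw [e]
    exact H.mul_mem (Subgroup.Normal.conj_mem ‹H.Normal› _ na ((T (f b))⁻¹)) nb
  let F : GL (Fin 2) (ZMod 3) →* GL (Fin 2) (ZMod 2) := MonoidHom.mk' f hmul
  have hsurj : Function.Surjective F := by
    intro k
    refine ⟨T k, ?_⟩
    refine huniq (T k) _ k (hf (T k)) ?_
    rw [inv_mul_cancel]
    exact H.one_mem
  have hker : H = F.ker := by
    ext g
    constructor
    · intro hg
      have : (T 1)⁻¹ * g ∈ H := by rw [hT1, inv_one, one_mul]; exact hg
      exact huniq g (f g) 1 (hf g) this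
    · intro hg
      have : f g = 1 := hg
      have h2 := hf g
      rwa [this, hT1, inv_one, one_mul] at h2
  exact ⟨(QuotientGroup.quotientMulEquivOfEq hker).trans
    (QuotientGroup.quotientKerEquivOfSurjective F hsurj)⟩
end

section
/- Every normal subgroup of GL₂(ℤ/3ℤ) of index 6 equals N := { [[x,-y],[y,x]] : x²+y² ≡ 1 mod 3 } ∪ { [[x,y],[y,-x]] : x²+y² ≡ -1 mod 3 }; in other words, GL₂(ℤ/3ℤ) has exactly one normal subgroup of index 6. -/
open Matrix

section Aux

abbrev GG := GL (Fin 2) (ZMod 3)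

private lemma decide1 : ∀ x y : ZMod 3, x ^ 2 + y ^ 2 = 1 →
    (!![x, -y; y, x] : Matrix (Fin 2) (Fin 2) (ZMod 3)) ^ 4 = 1 ∧
    (!![x, -y; y, x] : Matrix (Fin 2) (Fin 2) (ZMod 3)).det = 1 := by decide

private lemma decide2 : ∀ x y : ZMod 3, x ^ 2 + y ^ 2 = -1 →
    (!![x, y; y, -x] : Matrix (Fin 2) (Fin 2) (ZMod 3)) ^ 4 = 1 ∧
    (!![x, y; y, -x] : Matrix (Fin 2) (Fin 2) (ZMod 3)).det = 1 := by decide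

private lemma decideB : ∀ a b c d : ZMod 3,
    (!![a, b; c, d] : Matrix (Fin 2) (Fin 2) (ZMod 3)).det = 1 →
    (!![a, b; c, d] : Matrix (Fin 2) (Fin 2) (ZMod 3)) ^ 4 = 1 →
    ((∃ x y : ZMod 3, x ^ 2 + y ^ 2 = 1 ∧ !![a, b; c, d] = !![x, -y; y, x]) ∨
     (∃ x y : ZMod 3, x ^ 2 + y ^ 2 = -1 ∧ !![a, b; c, d] = !![x, y; y, -x])) := by decide

/-- characterization of Nset -/
private lemma mem_Nset_iff (g : GG) :
    g ∈ Nset ↔ (g ^ 4 = 1 ∧ ((g : Matrix (Fin 2) (Fin 2) (ZMod 3))).det = 1) := by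
  constructor
  · rintro (⟨x, y, hxy, hval⟩ | ⟨x, y, hxy, hval⟩)
    · refine ⟨Units.ext ?_, by rw [hval]; exact (decide1 x y hxy).2⟩
      rw [Units.val_pow_eq_pow_val, hval, Units.val_one]
      exact (decide1 x y hxy).1
    · refine ⟨Units.ext ?_, by rw [hval]; exact (decide2 x y hxy).2⟩
      rw [Units.val_pow_eq_pow_val, hval, Units.val_one]
      exact (decide2 x y hxy).1
  · rintro ⟨h4, hdet⟩
    have hval : (g : Matrix (Fin 2) (Fin 2) (ZMod 3)) =
        !![g.val 0 0, g.val 0 1; g.val 1 0, g.val 1 1] := Matrix.etaExpand_eq (g.val) ▸ rfl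
    have h4' : (!![g.val 0 0, g.val 0 1; g.val 1 0, g.val 1 1] :
        Matrix (Fin 2) (Fin 2) (ZMod 3)) ^ 4 = 1 := by
      rw [← hval, ← Units.val_pow_eq_pow_val, h4, Units.val_one]
    have hdet' := hval ▸ hdet
    have := decideB _ _ _ _ hdet' h4'
    refine this.imp ?_ ?_ <;> rintro ⟨x, y, h1, h2⟩ <;> exact ⟨x, y, h1, hval.trans h2⟩

private lemma mulaux1 : ∀ x y : ZMod 3, x ^ 2 + y ^ 2 = 1 →
    (!![x, -y; y, x] : Matrix (Fin 2) (Fin 2) (ZMod 3)) * !![x, y; -y, x] = 1 ∧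
    (!![x, y; -y, x] : Matrix (Fin 2) (Fin 2) (ZMod 3)) * !![x, -y; y, x] = 1 := by decide

private lemma mulaux2 : ∀ x y : ZMod 3, x ^ 2 + y ^ 2 = -1 →
    (!![x, y; y, -x] : Matrix (Fin 2) (Fin 2) (ZMod 3)) * !![-x, -y; -y, x] = 1 ∧
    (!![-x, -y; -y, x] : Matrix (Fin 2) (Fin 2) (ZMod 3)) * !![x, y; y, -x] = 1 := by decide

private def u1 (x y : ZMod 3) (h : x ^ 2 + y ^ 2 = 1) : GG :=
  ⟨!![x, -y; y, x], !![x, y; -y, x], (mulaux1 x y h).1, (mulaux1 x y h).2⟩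

private def u2 (x y : ZMod 3) (h : x ^ 2 + y ^ 2 = -1) : GG :=
  ⟨!![x, y; y, -x], !![-x, -y; -y, x], (mulaux2 x y h).1, (mulaux2 x y h).2⟩

/-- the subgroup with carrier Nset -/
private def Qgrp : Subgroup GG where
  carrier := Nset
  one_mem' := Or.inl ⟨1, 0, by decide, by rw [Units.val_one]; decide⟩
  mul_mem' := by
    rintro a b (⟨x, y, hxy, hval⟩ | ⟨x, y, hxy, hval⟩) (⟨x', y', hxy', hval'⟩ | ⟨x', y', hxy', hval'⟩)
    · exact Or.inl ⟨x*x' - y*y', x*y' + y*x', by linear_combination (x'^2+y'^2) * hxy + hxy',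
        by rw [Units.val_mul, hval, hval', Matrix.mul_fin_two]; congr 1 <;> ring⟩
    · exact Or.inr ⟨x*x' - y*y', x*y' + y*x', by linear_combination (x'^2+y'^2) * hxy + hxy',
        by rw [Units.val_mul, hval, hval', Matrix.mul_fin_two]; congr 1 <;> ring⟩
    · exact Or.inr ⟨x*x' + y*y', y*x' - x*y', by linear_combination (x'^2+y'^2) * hxy - hxy',
        by rw [Units.val_mul, hval, hval', Matrix.mul_fin_two]; congr 1 <;> ring⟩
    · exact Or.inl ⟨x*x' + y*y', y*x' - x*y', by linear_combination (x'^2+y'^2) * hxy - hxy',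
        by rw [Units.val_mul, hval, hval', Matrix.mul_fin_two]; congr 1 <;> ring⟩
  inv_mem' := by
    rintro a (⟨x, y, hxy, hval⟩ | ⟨x, y, hxy, hval⟩)
    · refine Or.inl ⟨x, -y, by linear_combination hxy, ?_⟩
      have : (a : Matrix (Fin 2) (Fin 2) (ZMod 3)) * !![x, y; -y, x] = 1 := by
        rw [hval]; exact (mulaux1 x y hxy).1
      rw [Units.inv_eq_of_mul_eq_one_right this]
      congr 1; ring
    · refine Or.inr ⟨-x, -y, by linear_combination hxy, ?_⟩
      have : (a : Matrix (Fin 2) (Fin 2) (ZMod 3)) * !![-x, -y; -y, x] = 1 := by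
        rw [hval]; exact (mulaux2 x y hxy).1
      rw [Units.inv_eq_of_mul_eq_one_right this]
      congr 1; ring

private lemma Qgrp_normal : Qgrp.Normal := by
  constructor
  intro n hn g
  rw [show (n ∈ Qgrp) = (n ∈ Nset) from rfl, mem_Nset_iff] at hn
  rw [show (g * n * g⁻¹ ∈ Qgrp) = (g * n * g⁻¹ ∈ Nset) from rfl, mem_Nset_iff]
  constructor
  · rw [conj_pow, hn.1, mul_one, mul_inv_cancel]
  · have h1 : (g : Matrix (Fin 2) (Fin 2) (ZMod 3)).det *
        ((g⁻¹ : GG) : Matrix (Fin 2) (Fin 2) (ZMod 3)).det = 1 := by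
      rw [← Matrix.det_mul, ← Units.val_mul, mul_inv_cancel, Units.val_one, Matrix.det_one]
    rw [Units.val_mul, Units.val_mul, Matrix.det_mul, Matrix.det_mul, hn.2, mul_one]
    exact h1

private def Sfin : Finset GG :=
  {u1 1 0 (by decide), u1 (-1) 0 (by decide), u1 0 1 (by decide), u1 0 (-1) (by decide),
   u2 1 1 (by decide), u2 1 (-1) (by decide), u2 (-1) 1 (by decide), u2 (-1) (-1) (by decide)}

private lemma Sfin_card : Sfin.card = 8 := by decide

private lemma keyA : ∀ x y : ZMod 3, x ^ 2 + y ^ 2 = 1 →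
    (x = 1 ∧ y = 0) ∨ (x = -1 ∧ y = 0) ∨ (x = 0 ∧ y = 1) ∨ (x = 0 ∧ y = -1) := by decide

private lemma keyB : ∀ x y : ZMod 3, x ^ 2 + y ^ 2 = -1 →
    (x = 1 ∧ y = 1) ∨ (x = 1 ∧ y = -1) ∨ (x = -1 ∧ y = 1) ∨ (x = -1 ∧ y = -1) := by decide

private lemma Nset_eq_Sfin : Nset = ↑Sfin := by
  ext g
  constructor
  · rintro (⟨x, y, hxy, hval⟩ | ⟨x, y, hxy, hval⟩)
    · rcases keyA x y hxy with ⟨rfl, rfl⟩ | ⟨rfl, rfl⟩ | ⟨rfl, rfl⟩ | ⟨rfl, rfl⟩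
      · rw [show g = u1 1 0 (by decide) from Units.ext hval]; simp [Sfin]
      · rw [show g = u1 (-1) 0 (by decide) from Units.ext hval]; simp [Sfin]
      · rw [show g = u1 0 1 (by decide) from Units.ext hval]; simp [Sfin]
      · rw [show g = u1 0 (-1) (by decide) from Units.ext hval]; simp [Sfin]
    · rcases keyB x y hxy with ⟨rfl, rfl⟩ | ⟨rfl, rfl⟩ | ⟨rfl, rfl⟩ | ⟨rfl, rfl⟩
      · rw [show g = u2 1 1 (by decide) from Units.ext hval]; simp [Sfin]
      · rw [show g = u2 1 (-1) (by decide) from Units.ext hval]; simp [Sfin]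
      · rw [show g = u2 (-1) 1 (by decide) from Units.ext hval]; simp [Sfin]
      · rw [show g = u2 (-1) (-1) (by decide) from Units.ext hval]; simp [Sfin]
  · intro hg
    simp only [Sfin, Finset.coe_insert, Set.mem_insert_iff, Finset.coe_singleton,
      Set.mem_singleton_iff] at hg
    rcases hg with rfl | rfl | rfl | rfl | rfl | rfl | rfl | rfl
    · exact Or.inl ⟨1, 0, by decide, rfl⟩
    · exact Or.inl ⟨-1, 0, by decide, rfl⟩
    · exact Or.inl ⟨0, 1, by decide, rfl⟩
    · exact Or.inl ⟨0, -1, by decide, rfl⟩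
    · exact Or.inr ⟨1, 1, by decide, rfl⟩
    · exact Or.inr ⟨1, -1, by decide, rfl⟩
    · exact Or.inr ⟨-1, 1, by decide, rfl⟩
    · exact Or.inr ⟨-1, -1, by decide, rfl⟩

private lemma Qgrp_card : Nat.card Qgrp = 8 := by
  show Nat.card ↥Nset = 8
  rw [Nat.card_coe_set_eq, Nset_eq_Sfin, Set.ncard_coe_finset, Sfin_card]

private def ua : GG := ⟨!![1, 0; 0, 2], !![1, 0; 0, 2], by decide, by decide⟩
private def uc : GG := ⟨!![1, 1; 0, 2], !![1, 1; 0, 2], by decide, by decide⟩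

private lemma orderOf_ua : orderOf ua = 2 := by
  refine orderOf_eq_prime ?_ ?_
  · apply Units.ext
    rw [Units.val_pow_eq_pow_val, Units.val_one]
    decide
  · intro h
    exact absurd (congrArg Units.val h) (by decide)

private lemma orderOf_uc : orderOf uc = 2 := by
  refine orderOf_eq_prime ?_ ?_
  · apply Units.ext
    rw [Units.val_pow_eq_pow_val, Units.val_one]
    decide
  · intro h
    exact absurd (congrArg Units.val h) (by decide)

private lemma orderOf_uauc : orderOf (ua * uc) = 3 := by
  refine orderOf_eq_prime ?_ ?_
  · apply Units.ext
    rw [Units.val_pow_eq_pow_val, Units.val_one, Units.val_mul]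
    decide
  · intro h
    exact absurd (congrArg Units.val h) (by decide)

private lemma cardGG : Nat.card GG = 48 := by
  rw [Matrix.card_GL_field]; decide

private lemma factGG : (Nat.card GG).factorization 2 = 4 := by
  rw [cardGG, show (48 : ℕ) = 2 ^ 4 * 3 by norm_num,
    Nat.factorization_mul (by norm_num) (by norm_num),
    Nat.Prime.factorization_pow (by norm_num)]
  simp [Nat.factorization_eq_zero_of_not_dvd]

end Aux

theorem unique_normal_subgroup_index_six (H : Subgroup (GL (Fin 2) (ZMod 3)))
    (hN : H.Normal) (hi : H.index = 6) :
    (H : Set (GL (Fin 2) (ZMod 3))) = Nset := by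
  haveI : Fact (Nat.Prime 2) := ⟨by norm_num⟩
  haveI : Fact (Nat.Prime 3) := ⟨by norm_num⟩
  -- card H = 8
  have hcardH : Nat.card H = 8 := by
    have h1 := H.card_mul_index
    rw [hi, cardGG] at h1
    omega
  haveI := Qgrp_normal
  -- both are 2-groups
  have hH2 : IsPGroup 2 H := IsPGroup.of_card (show Nat.card ↥H = 2 ^ 3 by rw [hcardH]; norm_num)
  have hQ2 : IsPGroup 2 Qgrp := IsPGroup.of_card (show Nat.card ↥Qgrp = 2 ^ 3 by rw [Qgrp_card]; norm_num)
  -- the sup K is a 2-group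
  have hK2 : IsPGroup 2 (H ⊔ Qgrp : Subgroup GG) := hH2.to_sup_of_normal_right hQ2
  set K := H ⊔ Qgrp with hKdef
  obtain ⟨P, hKP⟩ := hK2.exists_le_sylow
  have hPcard : Nat.card P = 16 := by
    rw [P.card_eq_multiplicity, factGG]; norm_num
  have h8 : (8 : ℕ) ∣ Nat.card K := hcardH ▸ Subgroup.card_dvd_of_le le_sup_left
  have h16 : Nat.card K ∣ 16 := hPcard ▸ Subgroup.card_dvd_of_le hKP
  have hcases : Nat.card K = 8 ∨ Nat.card K = 16 := by
    obtain ⟨k, hk⟩ := h8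
    have hle : Nat.card K ≤ 16 := Nat.le_of_dvd (by norm_num) h16
    have hpos : 0 < Nat.card K := Nat.card_pos
    omega
  rcases hcases with hc | hc
  · -- K = 8, so H = K = Qgrp
    have hH : H = K := Subgroup.eq_of_le_of_card_ge le_sup_left (by rw [hc, hcardH])
    have hQ : Qgrp = K := Subgroup.eq_of_le_of_card_ge le_sup_right (by rw [hc, Qgrp_card])
    rw [hH, ← hQ]
    rfl
  · -- K = 16 : K is a normal Sylow 2-subgroup; contradiction
    exfalso
    haveI hKn : K.Normal := Subgroup.sup_normal H Qgrp
    let P₀ : Sylow 2 GG := Sylow.ofCard K (by rw [hc, factGG]; norm_num)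
    have hP₀ : (P₀ : Subgroup GG) = K := rfl
    haveI : Unique (Sylow 2 GG) := Sylow.unique_of_normal P₀ hKn
    have hmem : ∀ u : GG, orderOf u = 2 → u ∈ K := by
      intro u hu
      have h2u : IsPGroup 2 (Subgroup.zpowers u) :=
        IsPGroup.of_card (by rw [Nat.card_zpowers, hu, pow_one])
      obtain ⟨Pu, hPu⟩ := h2u.exists_le_sylow
      have : Pu = P₀ := Subsingleton.elim _ _
      rw [this] at hPu
      exact hPu (Subgroup.mem_zpowers u)
    have hmul : ua * uc ∈ K := mul_mem (hmem ua orderOf_ua) (hmem uc orderOf_uc)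
    have h3 : (3 : ℕ) ∣ Nat.card K := by
      have := orderOf_dvd_natCard (⟨ua * uc, hmul⟩ : K)
      rwa [← orderOf_injective K.subtype Subtype.coe_injective ⟨ua * uc, hmul⟩,
        show K.subtype ⟨ua * uc, hmul⟩ = ua * uc from rfl, orderOf_uauc] at this
    rw [hc] at h3
    norm_num at h3
end

section
/- Let G₀, G₁ be groups, Q a cyclic group, and ψ₀ : G₀ → Q, ψ₁ : G₁ → Q surjective homomorphisms. Let H = { (g₀, g₁) ∈ G₀ × G₁ : ψ₀(g₀) = ψ₁(g₁) } be the fibered product. Then the commutator subgroup of H equals [G₀, G₀] × [G₁, G₁]. -/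
/-- The commutator subgroup of a fibered product over a cyclic group is the
product of the commutator subgroups. -/
theorem commutator_of_fibered_product_over_cyclic
    {G₀ G₁ Q : Type*} [Group G₀] [Group G₁] [Group Q] [IsCyclic Q]
    (ψ₀ : G₀ →* Q) (ψ₁ : G₁ →* Q)
    (hψ₀ : Function.Surjective ψ₀) (hψ₁ : Function.Surjective ψ₁)
    (H : Subgroup (G₀ × G₁))
    (hH : (H : Set (G₀ × G₁)) = {p : G₀ × G₁ | ψ₀ p.1 = ψ₁ p.2}) :
    ⁅H, H⁆ = (commutator G₀).prod (commutator G₁) := by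
  have hmem : ∀ p : G₀ × G₁, p ∈ H ↔ ψ₀ p.1 = ψ₁ p.2 := by
    intro p
    rw [← SetLike.mem_coe, hH]
    rfl
  obtain ⟨q, hq⟩ := IsCyclic.exists_generator (α := Q)
  obtain ⟨x, hx⟩ := hψ₁ q
  obtain ⟨y, hy⟩ := hψ₀ q
  apply le_antisymm
  · rw [Subgroup.commutator_le]
    rintro ⟨a₀, a₁⟩ _ ⟨b₀, b₁⟩ _
    exact ⟨Subgroup.commutator_mem_commutator (Subgroup.mem_top _) (Subgroup.mem_top _),
      Subgroup.commutator_mem_commutator (Subgroup.mem_top _) (Subgroup.mem_top _)⟩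
  · rw [Subgroup.prod_le_iff]
    constructor
    · rw [Subgroup.map_le_iff_le_comap, commutator, Subgroup.commutator_le]
      intro a _ b _
      obtain ⟨m, hm⟩ := hq (ψ₀ a)
      obtain ⟨n, hn⟩ := hq (ψ₀ b)
      have ha : (a, x ^ m) ∈ H := by
        rw [hmem]
        simp [← hm, hx]
      have hb : (b, x ^ n) ∈ H := by
        rw [hmem]
        simp [← hn, hx]
      have := Subgroup.commutator_mem_commutator ha hb
      open scoped commutatorElement in
      have heq : ⁅((a, x ^ m) : G₀ × G₁), (b, x ^ n)⁆ = (⁅a, b⁆, 1) := by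
        have : ⁅x ^ m, x ^ n⁆ = 1 :=
          commutatorElement_eq_one_iff_commute.mpr
            ((Commute.refl x).zpow_zpow m n)
        rw [commutatorElement_def] at this; simp [commutatorElement_def, Prod.ext_iff, this]
      rw [heq] at this
      exact this
    · rw [Subgroup.map_le_iff_le_comap, commutator, Subgroup.commutator_le]
      intro a _ b _
      obtain ⟨m, hm⟩ := hq (ψ₁ a)
      obtain ⟨n, hn⟩ := hq (ψ₁ b)
      have ha : (y ^ m, a) ∈ H := by
        rw [hmem]
        simp [← hm, hy]
      have hb : (y ^ n, b) ∈ H := by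
        rw [hmem]
        simp [← hn, hy]
      have := Subgroup.commutator_mem_commutator ha hb
      open scoped commutatorElement in
      have heq : ⁅((y ^ m, a) : G₀ × G₁), (y ^ n, b)⁆ = (1, ⁅a, b⁆) := by
        have : ⁅y ^ m, y ^ n⁆ = 1 :=
          commutatorElement_eq_one_iff_commute.mpr
            ((Commute.refl y).zpow_zpow m n)
        rw [commutatorElement_def] at this; simp [commutatorElement_def, Prod.ext_iff, this]
      rw [heq] at this
      exact this
end

section
/- The reduction map GL₂(ℤ/4ℤ) → GL₂(ℤ/2ℤ) admits a splitting (a group-theoretic section), so GL₂(ℤ/4ℤ) is isomorphic to a semidirect product GL₂(ℤ/2ℤ) ⋉ M₂(ℤ/2ℤ), where GL₂(ℤ/2ℤ) acts on the additive group M₂(ℤ/2ℤ) by conjugation. -/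
open Matrix

/-- The reduction map `GL₂(ℤ/4ℤ) → GL₂(ℤ/2ℤ)`. -/
noncomputable def red42 : GL (Fin 2) (ZMod 4) →* GL (Fin 2) (ZMod 2) :=
  Matrix.GeneralLinearGroup.map (ZMod.castHom (by norm_num : (2 : ℕ) ∣ 4) (ZMod 2))


/-- Conjugation by `g ∈ GL₂(ℤ/2ℤ)` as an automorphism of the additive group `M₂(ℤ/2ℤ)`. -/
def conjAut (g : GL (Fin 2) (ZMod 2)) :
    Multiplicative (Matrix (Fin 2) (Fin 2) (ZMod 2)) ≃*
      Multiplicative (Matrix (Fin 2) (Fin 2) (ZMod 2)) :=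
  AddEquiv.toMultiplicative
  { toFun := fun A => ↑g * A * ↑g⁻¹
    invFun := fun A => ↑g⁻¹ * A * ↑g
    left_inv := by intro A; simp only [mul_assoc, Units.inv_mul, mul_one, Units.inv_mul_cancel_left]
    right_inv := by intro A; simp only [mul_assoc, Units.mul_inv, mul_one, Units.mul_inv_cancel_left]
    map_add' := by intro A B; noncomm_ring }

/-- The action of `GL₂(ℤ/2ℤ)` on `M₂(ℤ/2ℤ)` by conjugation. -/
def conjHom : GL (Fin 2) (ZMod 2) →*
    MulAut (Multiplicative (Matrix (Fin 2) (Fin 2) (ZMod 2))) where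
  toFun := conjAut
  map_one' := by
    ext A
    simp [conjAut]
  map_mul' g h := by
    ext A
    simp [conjAut, mul_assoc]

def cc : ZMod 4 →+* ZMod 2 := ZMod.castHom (by norm_num : (2:ℕ) ∣ 4) (ZMod 2)
/-- doubling map -/
def dd : ZMod 2 → ZMod 4 := fun x => 2 * (x.val : ZMod 4)
def llift : ZMod 2 → ZMod 4 := fun x => (x.val : ZMod 4)
def hhalf : ZMod 4 → ZMod 2 := fun z => ((z.val / 2 : ℕ) : ZMod 2)

lemma dd_add : ∀ x y : ZMod 2, dd (x + y) = dd x + dd y := by decide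
lemma dd_dd : ∀ x y : ZMod 2, dd x * dd y = 0 := by decide
lemma dd_self : ∀ x : ZMod 2, dd x + dd x = 0 := by decide
lemma dd_zero : dd 0 = 0 := by decide
lemma dd_inj : ∀ x : ZMod 2, dd x = 0 → x = 0 := by decide
lemma dd_mulS : ∀ (x : ZMod 2) (s : ZMod 4), dd x * s = dd (x * cc s) := by decide
lemma S_muldd : ∀ (x : ZMod 2) (s : ZMod 4), s * dd x = dd (cc s * x) := by decide
lemma cc_dd : ∀ x : ZMod 2, cc (dd x) = 0 := by decide
lemma zdecomp : ∀ z : ZMod 4, z = llift (cc z) + dd (hhalf z) := by decide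
lemma llift_one : llift 1 = 1 := by decide
lemma llift_zero : llift 0 = 0 := by decide

def eM : Fin 6 → Matrix (Fin 2) (Fin 2) (ZMod 2) :=
  ![!![1,0;0,1], !![0,1;1,1], !![1,1;1,0], !![0,1;1,0], !![1,1;0,1], !![1,0;1,1]]
def fM : Fin 6 → Matrix (Fin 2) (Fin 2) (ZMod 4) :=
  ![!![1,0;0,1], !![0,3;1,3], !![3,1;3,0], !![0,1;1,0], !![1,3;0,3], !![3,0;3,1]]
def invT : Fin 6 → Fin 6 := ![0,2,1,3,4,5]

lemma eM_inv : ∀ i, eM i * eM (invT i) = 1 ∧ eM (invT i) * eM i = 1 := by decide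
lemma fM_inv : ∀ i, fM i * fM (invT i) = 1 ∧ fM (invT i) * fM i = 1 := by decide
lemma tab : ∀ i j, ∃ k, eM i * eM j = eM k ∧ fM i * fM j = fM k := by decide
lemma fM_red : ∀ i, (fM i).map ⇑cc = eM i := by decide
lemma eM_inj : ∀ i j, eM i = eM j → i = j := by decide

def eU (i : Fin 6) : GL (Fin 2) (ZMod 2) := ⟨eM i, eM (invT i), (eM_inv i).1, (eM_inv i).2⟩
def fU (i : Fin 6) : GL (Fin 2) (ZMod 4) := ⟨fM i, fM (invT i), (fM_inv i).1, (fM_inv i).2⟩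

lemma eU_inj {i j} (h : eU i = eU j) : i = j := eM_inj i j (congrArg Units.val h)

lemma eU_surj (g : GL (Fin 2) (ZMod 2)) : ∃ i, eU i = g := by
  have hdet : (g : Matrix (Fin 2) (Fin 2) (ZMod 2)).det ≠ 0 := by
    have hu : IsUnit (g : Matrix (Fin 2) (Fin 2) (ZMod 2)) := ⟨g, rfl⟩
    have := (Matrix.isUnit_iff_isUnit_det _).mp hu
    exact isUnit_iff_ne_zero.mp this
  have h2 : ∀ x : ZMod 2, x = 0 ∨ x = 1 := by decide
  have hg := Matrix.eta_fin_two (g.val)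
  rcases h2 (g.val 0 0) with h00 | h00 <;> rcases h2 (g.val 0 1) with h01 | h01 <;>
    rcases h2 (g.val 1 0) with h10 | h10 <;> rcases h2 (g.val 1 1) with h11 | h11 <;>
    rw [h00, h01, h10, h11] at hg <;>
    first
      | (exact absurd (by rw [hg, Matrix.det_fin_two_of]; decide) hdet)
      | exact ⟨0, Units.ext (by rw [hg]; decide)⟩
      | exact ⟨1, Units.ext (by rw [hg]; decide)⟩
      | exact ⟨2, Units.ext (by rw [hg]; decide)⟩
      | exact ⟨3, Units.ext (by rw [hg]; decide)⟩
      | exact ⟨4, Units.ext (by rw [hg]; decide)⟩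
      | exact ⟨5, Units.ext (by rw [hg]; decide)⟩

noncomputable def idx (g : GL (Fin 2) (ZMod 2)) : Fin 6 := (eU_surj g).choose
lemma eU_idx (g : GL (Fin 2) (ZMod 2)) : eU (idx g) = g := (eU_surj g).choose_spec

noncomputable def sec : GL (Fin 2) (ZMod 2) →* GL (Fin 2) (ZMod 4) where
  toFun g := fU (idx g)
  map_one' := by
    have h0 : eU (idx 1) = eU 0 := by rw [eU_idx]; exact (Units.ext (by decide)).symm
    show fU (idx 1) = 1
    rw [eU_inj h0]
    exact Units.ext (by decide)
  map_mul' g h := by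
    obtain ⟨k, hk1, hk2⟩ := tab (idx g) (idx h)
    have h0 : eU (idx (g * h)) = eU k := by
      rw [eU_idx, ← eU_idx g, ← eU_idx h]
      exact Units.ext hk1
    show fU (idx (g * h)) = fU (idx g) * fU (idx h)
    rw [eU_inj h0]
    exact Units.ext hk2.symm
lemma red42_val (x : GL (Fin 2) (ZMod 4)) :
    (red42 x).val = (x.val).map ⇑cc := rfl

lemma red42_fU (i : Fin 6) : red42 (fU i) = eU i :=
  Units.ext (by rw [red42_val]; exact fM_red i)

lemma red42_sec (g : GL (Fin 2) (ZMod 2)) : red42 (sec g) = g := by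
  show red42 (fU (idx g)) = g
  rw [red42_fU, eU_idx]

-- matrix-level lemmas about dd
lemma mD_add (A B : Matrix (Fin 2) (Fin 2) (ZMod 2)) :
    (A + B).map dd = A.map dd + B.map dd := by
  ext i j; simp [Matrix.map_apply, Matrix.add_apply, dd_add]

lemma mD_mul (A B : Matrix (Fin 2) (Fin 2) (ZMod 2)) :
    (A.map dd) * (B.map dd) = 0 := by
  ext i j
  rw [Matrix.mul_apply, Fin.sum_univ_two]
  simp [Matrix.map_apply, dd_dd]

lemma mD_self (A : Matrix (Fin 2) (Fin 2) (ZMod 2)) : A.map dd + A.map dd = 0 := by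
  ext i j; simp [Matrix.map_apply, Matrix.add_apply, dd_self]

lemma mD_mulS (A : Matrix (Fin 2) (Fin 2) (ZMod 2)) (S : Matrix (Fin 2) (Fin 2) (ZMod 4)) :
    (A.map dd) * S = (A * S.map ⇑cc).map dd := by
  ext i j
  rw [Matrix.map_apply, Matrix.mul_apply, Matrix.mul_apply, Fin.sum_univ_two, Fin.sum_univ_two,
    dd_add]
  simp [Matrix.map_apply, dd_mulS]

lemma mS_mulD (A : Matrix (Fin 2) (Fin 2) (ZMod 2)) (S : Matrix (Fin 2) (Fin 2) (ZMod 4)) :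
    S * (A.map dd) = (S.map ⇑cc * A).map dd := by
  ext i j
  rw [Matrix.map_apply, Matrix.mul_apply, Matrix.mul_apply, Fin.sum_univ_two, Fin.sum_univ_two,
    dd_add]
  simp [Matrix.map_apply, S_muldd]

lemma uu_sq (A : Matrix (Fin 2) (Fin 2) (ZMod 2)) :
    ((1 : Matrix (Fin 2) (Fin 2) (ZMod 4)) + A.map dd) * (1 + A.map dd) = 1 := by
  rw [mul_add, mul_one, add_mul, one_mul, mD_mul, add_zero, add_assoc, mD_self, add_zero]

def uU (A : Matrix (Fin 2) (Fin 2) (ZMod 2)) : GL (Fin 2) (ZMod 4) :=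
  ⟨1 + A.map dd, 1 + A.map dd, uu_sq A, uu_sq A⟩

lemma mD_zero : ((0 : Matrix (Fin 2) (Fin 2) (ZMod 2))).map dd = 0 := by
  ext i j; simp [Matrix.map_apply, dd_zero]

def uHom : Multiplicative (Matrix (Fin 2) (Fin 2) (ZMod 2)) →* GL (Fin 2) (ZMod 4) where
  toFun A := uU A.toAdd
  map_one' := Units.ext (by
    show (1 : Matrix (Fin 2) (Fin 2) (ZMod 4)) + (0 : Matrix (Fin 2) (Fin 2) (ZMod 2)).map dd = 1
    rw [mD_zero, add_zero])
  map_mul' A B := Units.ext (by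
    show (1 : Matrix (Fin 2) (Fin 2) (ZMod 4)) + (A.toAdd + B.toAdd).map dd
        = (1 + A.toAdd.map dd) * (1 + B.toAdd.map dd)
    rw [mD_add, mul_add, mul_one, add_mul, one_mul, mD_mul, add_zero]
    abel)

lemma red_uU (M : Matrix (Fin 2) (Fin 2) (ZMod 2)) :
    ((1 : Matrix (Fin 2) (Fin 2) (ZMod 4)) + M.map dd).map ⇑cc = 1 := by
  ext i j
  by_cases h : i = j <;>
    simp [Matrix.map_apply, Matrix.add_apply, Matrix.one_apply, h, map_add, cc_dd]
lemma sec_val_red (g : GL (Fin 2) (ZMod 2)) : ((sec g).val).map ⇑cc = g.val := by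
  have h := congrArg Units.val (red42_sec g)
  rwa [red42_val] at h

lemma sec_inv_val_red (g : GL (Fin 2) (ZMod 2)) :
    (((sec g)⁻¹).val).map ⇑cc = (g⁻¹).val := by
  have h0 : red42 ((sec g)⁻¹) = g⁻¹ := by rw [map_inv, red42_sec]
  have h := congrArg Units.val h0
  rwa [red42_val] at h

lemma compat (g : GL (Fin 2) (ZMod 2)) :
    uHom.comp (conjHom g).toMonoidHom = (MulAut.conj (sec g)).toMonoidHom.comp uHom := by
  refine MonoidHom.ext fun A => ?_
  show uHom (conjHom g A) = sec g * uHom A * (sec g)⁻¹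
  refine Units.ext ?_
  have hSS : (sec g).val * ((sec g)⁻¹).val = 1 := by
    rw [← Units.val_mul, mul_inv_cancel, Units.val_one]
  show (1 : Matrix (Fin 2) (Fin 2) (ZMod 4)) + ((g.val * A.toAdd * (g⁻¹).val)).map dd
      = (sec g).val * ((1 + A.toAdd.map dd)) * ((sec g)⁻¹).val
  rw [mul_add, mul_one, add_mul, hSS, mS_mulD, mD_mulS, sec_val_red, sec_inv_val_red]

noncomputable def liftφ :
    Multiplicative (Matrix (Fin 2) (Fin 2) (ZMod 2)) ⋊[conjHom] GL (Fin 2) (ZMod 2) →*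
      GL (Fin 2) (ZMod 4) :=
  SemidirectProduct.lift uHom sec compat

lemma liftφ_inl (n : Multiplicative (Matrix (Fin 2) (Fin 2) (ZMod 2))) :
    liftφ (SemidirectProduct.inl n) = uHom n :=
  SemidirectProduct.lift_inl _ _ _ n

lemma liftφ_inr (h : GL (Fin 2) (ZMod 2)) : liftφ (SemidirectProduct.inr h) = sec h :=
  SemidirectProduct.lift_inr _ _ _ h

lemma liftφ_inj : Function.Injective liftφ := by
  rw [injective_iff_map_eq_one]
  intro x hx
  rw [← SemidirectProduct.inl_left_mul_inr_right x] at hx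
  rw [_root_.map_mul, liftφ_inl, liftφ_inr] at hx
  have hred : red42 (uHom x.left) = 1 := Units.ext (by
    rw [red42_val, Units.val_one]
    exact red_uU _)
  have hr : x.right = 1 := by
    have h := congrArg red42 hx
    rwa [_root_.map_mul, hred, one_mul, red42_sec, _root_.map_one] at h
  have hl : uHom x.left = 1 := by rwa [hr, _root_.map_one, mul_one] at hx
  have hD : ((x.left.toAdd).map dd) = 0 := by
    have hv := congrArg Units.val hl
    have hv' : (1 : Matrix (Fin 2) (Fin 2) (ZMod 4)) + (x.left.toAdd).map dd = 1 + 0 := by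
      rw [add_zero]; exact hv
    exact add_left_cancel hv'
  have hl1 : x.left = 1 := by
    have h0 : x.left.toAdd = 0 := by
      ext i j
      have h := congrFun (congrFun hD i) j
      exact dd_inj _ (by simpa [Matrix.map_apply] using h)
    exact Multiplicative.toAdd.injective h0
  rw [← SemidirectProduct.inl_left_mul_inr_right x, hr, hl1]
  simp

lemma liftφ_surj : Function.Surjective liftφ := by
  intro x
  set g := red42 x with hgdef
  set y := x * (sec g)⁻¹ with hy
  have hyred : (y.val).map ⇑cc = 1 := by
    have h1 : red42 y = 1 := by
      rw [hy, _root_.map_mul, map_inv, red42_sec, ← hgdef, mul_inv_cancel]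
    have h2 := congrArg Units.val h1
    rwa [red42_val, Units.val_one] at h2
  refine ⟨SemidirectProduct.inl (Multiplicative.ofAdd (y.val.map hhalf)) *
      SemidirectProduct.inr g, ?_⟩
  rw [_root_.map_mul, liftφ_inl, liftφ_inr]
  have hyu : uHom (Multiplicative.ofAdd (y.val.map hhalf)) = y := by
    refine Units.ext ?_
    show (1 : Matrix (Fin 2) (Fin 2) (ZMod 4)) + ((y.val.map hhalf).map dd) = y.val
    ext i j
    have hz := zdecomp (y.val i j)
    have hc : cc (y.val i j) = (1 : Matrix (Fin 2) (Fin 2) (ZMod 2)) i j := by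
      have h := congrFun (congrFun hyred i) j
      simpa [Matrix.map_apply] using h
    rw [hc] at hz
    have h1 : llift ((1 : Matrix (Fin 2) (Fin 2) (ZMod 2)) i j)
        = (1 : Matrix (Fin 2) (Fin 2) (ZMod 4)) i j := by
      by_cases h : i = j <;> simp [Matrix.one_apply, h, llift_one, llift_zero]
    rw [h1] at hz
    rw [Matrix.add_apply, Matrix.map_apply, Matrix.map_apply]
    exact hz.symm
  rw [hyu, hy]
  exact inv_mul_cancel_right x (sec g)

/-- The reduction map `GL₂(ℤ/4ℤ) → GL₂(ℤ/2ℤ)` splits, and `GL₂(ℤ/4ℤ)` is the semidirect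
product `GL₂(ℤ/2ℤ) ⋉ M₂(ℤ/2ℤ)` with the conjugation action. -/
theorem GL2_ZMod4_semidirect :
    (∃ s : GL (Fin 2) (ZMod 2) →* GL (Fin 2) (ZMod 4),
      red42.comp s = MonoidHom.id (GL (Fin 2) (ZMod 2))) ∧
    Nonempty (GL (Fin 2) (ZMod 4) ≃*
      Multiplicative (Matrix (Fin 2) (Fin 2) (ZMod 2)) ⋊[conjHom] GL (Fin 2) (ZMod 2)) := by
  constructor
  · exact ⟨sec, MonoidHom.ext fun g => red42_sec g⟩
  · exact ⟨(MulEquiv.ofBijective liftφ ⟨liftφ_inj, liftφ_surj⟩).symm⟩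
end

section
/- Every group homomorphism χ : π⁻¹(SL₂(ℤ/3ℤ)) → ℤ/3ℤ is of the form a₁χ₁ + a₂χ₂ for some a₁, a₂ ∈ ℤ/3ℤ, where π : GL₂(ℤ/9ℤ) → GL₂(ℤ/3ℤ) is reduction mod 3, χ₁ = η₁ ∘ θ ∘ π and χ₂ = η₂ ∘ det, with θ : GL₂(ℤ/3ℤ) → GL₂(ℤ/2ℤ) the quotient by the unique index-6 normal subgroup, η₁ an isomorphism from the cyclic order-3 subgroup of GL₂(ℤ/2ℤ) to ℤ/3ℤ, and η₂ an isomorphism (1 + 3ℤ/9ℤ, ·) → (ℤ/3ℤ, +). -/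
open Matrix

/-- The reduction map `GL₂(ℤ/9ℤ) → GL₂(ℤ/3ℤ)`. -/
noncomputable def red93 : GL (Fin 2) (ZMod 9) →* GL (Fin 2) (ZMod 3) :=
  Matrix.GeneralLinearGroup.map (ZMod.castHom (by norm_num : (3 : ℕ) ∣ 9) (ZMod 3))

/-- `π⁻¹(SL₂(ℤ/3ℤ)) ⊆ GL₂(ℤ/9ℤ)`. -/
noncomputable def S93 : Subgroup (GL (Fin 2) (ZMod 9)) :=
  Subgroup.comap red93
    (MonoidHom.ker (Matrix.GeneralLinearGroup.det : GL (Fin 2) (ZMod 3) →* (ZMod 3)ˣ))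

namespace ProofAux

abbrev f : ZMod 9 →+* ZMod 3 := ZMod.castHom (by norm_num : (3 : ℕ) ∣ 9) (ZMod 3)

lemma red93_val (g : GL (Fin 2) (ZMod 9)) :
    ((red93 g : GL (Fin 2) (ZMod 3)) : Matrix (Fin 2) (Fin 2) (ZMod 3)) =
      (g : Matrix (Fin 2) (Fin 2) (ZMod 9)).map f := rfl

lemma mem_S93 (g : GL (Fin 2) (ZMod 9)) :
    g ∈ S93 ↔ ((g : Matrix (Fin 2) (Fin 2) (ZMod 9)).map f).det = 1 := by
  rw [S93, Subgroup.mem_comap, MonoidHom.mem_ker, Units.ext_iff,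
    Matrix.GeneralLinearGroup.val_det_apply, red93_val]
  rfl

/-- element E12(1) -/
def u : S93 := ⟨⟨!![1,1;0,1], !![1,8;0,1], by decide, by decide⟩, by rw [mem_S93]; decide⟩
/-- element diag(4,1) -/
def v : S93 := ⟨⟨!![4,0;0,1], !![7,0;0,1], by decide, by decide⟩, by rw [mem_S93]; decide⟩
/-- diag(2,5) -/
def a1 : S93 := ⟨⟨!![2,0;0,5], !![5,0;0,2], by decide, by decide⟩, by rw [mem_S93]; decide⟩
/-- diag(5,2) -/
def a2 : S93 := ⟨⟨!![5,0;0,2], !![2,0;0,5], by decide, by decide⟩, by rw [mem_S93]; decide⟩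
/-- E21(1) -/
def b2 : S93 := ⟨⟨!![1,0;1,1], !![1,0;8,1], by decide, by decide⟩, by rw [mem_S93]; decide⟩
/-- w = [[0,-1],[1,0]] -/
def a3 : S93 := ⟨⟨!![0,8;1,0], !![0,1;8,0], by decide, by decide⟩, by rw [mem_S93]; decide⟩
/-- E12(3) -/
def g1 : S93 := ⟨⟨!![1,3;0,1], !![1,6;0,1], by decide, by decide⟩, by rw [mem_S93]; decide⟩
/-- E21(3) -/
def g2 : S93 := ⟨⟨!![1,0;3,1], !![1,0;6,1], by decide, by decide⟩, by rw [mem_S93]; decide⟩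
/-- diag(4,7) -/
def g3 : S93 := ⟨⟨!![4,0;0,7], !![7,0;0,4], by decide, by decide⟩, by rw [mem_S93]; decide⟩

set_option maxHeartbeats 1000000 in
lemma hg1 : g1 = a1 * u * a1⁻¹ * u⁻¹ := Subtype.ext (Units.ext (by decide))
set_option maxHeartbeats 1000000 in
lemma hg2 : g2 = a2 * b2 * a2⁻¹ * b2⁻¹ := Subtype.ext (Units.ext (by decide))
set_option maxHeartbeats 1000000 in
lemma hg3 : g3 = a3 * a2 * a3⁻¹ * a2⁻¹ := Subtype.ext (Units.ext (by decide))

lemma pow4_case1 : ∀ x y : ZMod 3, x ^ 2 + y ^ 2 = 1 →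
    (!![x, -y; y, x]) ^ 4 = 1 := by decide

lemma pow4_case2 : ∀ x y : ZMod 3, x ^ 2 + y ^ 2 = -1 →
    (!![x, y; y, -x]) ^ 4 = 1 := by decide

set_option synthInstance.maxHeartbeats 400000 in
set_option synthInstance.maxSize 1000 in
lemma decomp : ∀ a b c d : ZMod 9, f a = 1 → f b = 0 → f c = 0 →
    a * d - b * c = 1 →
    ∃ α β γ : Fin 3, a = 4 ^ (α : ℕ) ∧ b = 3 * ((β : ℕ) : ZMod 9) ∧
      c = 3 * ((γ : ℕ) : ZMod 9) ∧ d = 7 ^ (α : ℕ) := by decide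

lemma prodmat : ∀ α β γ : Fin 3,
    (!![(4 : ZMod 9) ^ (α : ℕ), 3 * ((β : ℕ) : ZMod 9);
        3 * ((γ : ℕ) : ZMod 9), (7 : ZMod 9) ^ (α : ℕ)]) =
    ((!![4,0;0,7] : Matrix (Fin 2) (Fin 2) (ZMod 9)) ^ (α : ℕ)) *
    ((!![1,3;0,1] : Matrix (Fin 2) (Fin 2) (ZMod 9)) ^ (β : ℕ)) *
    ((!![1,0;3,1] : Matrix (Fin 2) (Fin 2) (ZMod 9)) ^ (γ : ℕ)) := by decide

end ProofAux

open ProofAux in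
/-- Every homomorphism `χ : π⁻¹(SL₂(ℤ/3ℤ)) → ℤ/3ℤ` is of the form `a₁χ₁ + a₂χ₂`, where
`χ₁ = η₁ ∘ θ ∘ π` (with `θ` the quotient by the unique index-6 normal subgroup `N` and `η₁`
an isomorphism onto `ℤ/3ℤ` of the relevant order-3 image) and `χ₂ = η₂ ∘ det` (with `η₂`
an isomorphism `(1 + 3ℤ/9ℤ, ·) ≃ (ℤ/3ℤ, +)`). -/
theorem hom_to_ZMod3_is_combination
    (θ : GL (Fin 2) (ZMod 3) →* GL (Fin 2) (ZMod 2))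
    (hθ : Function.Surjective θ)
    (hker : (MonoidHom.ker θ : Set (GL (Fin 2) (ZMod 3))) = Nset)
    (χ₁ χ₂ : S93 →* Multiplicative (ZMod 3))
    (hχ₁ : ∀ x y : S93, χ₁ x = χ₁ y ↔ θ (red93 ↑x) = θ (red93 ↑y))
    (hχ₂ : ∀ x y : S93, χ₂ x = χ₂ y ↔
      Matrix.GeneralLinearGroup.det (x : GL (Fin 2) (ZMod 9)) =
        Matrix.GeneralLinearGroup.det (y : GL (Fin 2) (ZMod 9)))
    (χ : S93 →* Multiplicative (ZMod 3)) :
    ∃ a₁ a₂ : ZMod 3, ∀ x : S93,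
      Multiplicative.toAdd (χ x) =
        a₁ * Multiplicative.toAdd (χ₁ x) + a₂ * Multiplicative.toAdd (χ₂ x) := by
  -- generic facts about `Multiplicative (ZMod 3)`
  have comm1 : ∀ s t : Multiplicative (ZMod 3), s * t * s⁻¹ * t⁻¹ = 1 := by decide
  have key4 : ∀ t : Multiplicative (ZMod 3), t ^ 4 = 1 → t = 1 := by decide
  have hpow : ∀ s t : Multiplicative (ZMod 3), t ≠ 1 →
      t ^ ((Multiplicative.toAdd s * Multiplicative.toAdd t).val) = s := by decide
  -- χ kills the three generators of the congruence kernel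
  have hχgen : ∀ g : S93, (g = a1 * u * a1⁻¹ * u⁻¹ ∨ g = a2 * b2 * a2⁻¹ * b2⁻¹ ∨
      g = a3 * a2 * a3⁻¹ * a2⁻¹) → χ g = 1 := by
    rintro g (rfl | rfl | rfl) <;>
      rw [_root_.map_mul, _root_.map_mul, _root_.map_mul, _root_.map_inv, _root_.map_inv] <;> exact comm1 _ _
  have hχg1 : χ g1 = 1 := by rw [hg1]; exact hχgen _ (Or.inl rfl)
  have hχg2 : χ g2 = 1 := by rw [hg2]; exact hχgen _ (Or.inr (Or.inl rfl))
  have hχg3 : χ g3 = 1 := by rw [hg3]; exact hχgen _ (Or.inr (Or.inr rfl))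
  -- χ₁ v = 1
  have hχ₁v : χ₁ v = 1 := by
    have h : θ (red93 ↑v) = θ (red93 ↑(1 : S93)) := by
      congr 1
      apply Units.ext
      rw [red93_val, red93_val]
      decide
    rw [(hχ₁ v 1).mpr h, _root_.map_one]
  -- χ₂ u = 1
  have hχ₂u : χ₂ u = 1 := by
    have h : Matrix.GeneralLinearGroup.det ((u : GL (Fin 2) (ZMod 9))) =
        Matrix.GeneralLinearGroup.det (((1 : S93) : GL (Fin 2) (ZMod 9))) := by
      apply Units.ext
      rw [Matrix.GeneralLinearGroup.val_det_apply, Matrix.GeneralLinearGroup.val_det_apply]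
      decide
    rw [(hχ₂ u 1).mpr h, _root_.map_one]
  -- χ₁ u ≠ 1
  have hb₁ : χ₁ u ≠ 1 := by
    intro h
    have h2 : θ (red93 ↑u) = θ (red93 ↑(1 : S93)) := by
      rw [← _root_.map_one χ₁] at h; exact (hχ₁ u 1).mp h
    have h3 : red93 (u : GL (Fin 2) (ZMod 9)) ∈ MonoidHom.ker θ := by
      rw [MonoidHom.mem_ker]
      rw [h2]; simp
    rw [← SetLike.mem_coe, hker] at h3
    have hval : ((red93 (u : GL (Fin 2) (ZMod 9)) : GL (Fin 2) (ZMod 3)) :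
        Matrix (Fin 2) (Fin 2) (ZMod 3)) = !![1,1;0,1] := by
      rw [red93_val]; decide
    rcases h3 with ⟨x, y, hxy, hm⟩ | ⟨x, y, hxy, hm⟩ <;> rw [hval] at hm <;>
      revert hxy hm <;> revert x y <;> decide
  -- χ₂ v ≠ 1
  have hb₂ : χ₂ v ≠ 1 := by
    intro h
    have h2 := (hχ₂ v 1).mp (by rw [h, _root_.map_one])
    have h3 : Matrix.det ((v : GL (Fin 2) (ZMod 9)) : Matrix (Fin 2) (Fin 2) (ZMod 9)) =
        Matrix.det (((1 : S93) : GL (Fin 2) (ZMod 9)) : Matrix (Fin 2) (Fin 2) (ZMod 9)) := by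
      rw [← Matrix.GeneralLinearGroup.val_det_apply, ← Matrix.GeneralLinearGroup.val_det_apply, h2]
    revert h3; decide
  refine ⟨Multiplicative.toAdd (χ u) * Multiplicative.toAdd (χ₁ u),
          Multiplicative.toAdd (χ v) * Multiplicative.toAdd (χ₂ v), ?_⟩
  intro x
  set i : ℕ := (Multiplicative.toAdd (χ₁ x) * Multiplicative.toAdd (χ₁ u)).val with hi
  set j : ℕ := (Multiplicative.toAdd (χ₂ x) * Multiplicative.toAdd (χ₂ v)).val with hj
  set k : S93 := x * u⁻¹ ^ i * v⁻¹ ^ j with hk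
  have hχ₁k : χ₁ k = 1 := by
    rw [hk, _root_.map_mul, _root_.map_mul, _root_.map_pow, _root_.map_pow, _root_.map_inv, _root_.map_inv, hχ₁v, inv_one, one_pow,
      mul_one, inv_pow, hpow (χ₁ x) (χ₁ u) hb₁, mul_inv_cancel]
  have hχ₂k : χ₂ k = 1 := by
    rw [hk, _root_.map_mul, _root_.map_mul, _root_.map_pow, _root_.map_pow, _root_.map_inv, _root_.map_inv, hχ₂u, inv_one, one_pow,
      inv_pow, hpow (χ₂ x) (χ₂ v) hb₂]
    rw [mul_comm (χ₂ x), mul_assoc, mul_inv_cancel, mul_one]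
  -- k lies in the "kernel" K : its reduction is in Nset and its det is 1
  have hNk : red93 (k : GL (Fin 2) (ZMod 9)) ∈ Nset := by
    rw [← hker, SetLike.mem_coe, MonoidHom.mem_ker]
    have h2 := (hχ₁ k 1).mp (by rw [hχ₁k, _root_.map_one])
    rw [h2]; simp
  have hdetk : Matrix.GeneralLinearGroup.det ((k : GL (Fin 2) (ZMod 9))) = 1 := by
    have h2 := (hχ₂ k 1).mp (by rw [hχ₂k, _root_.map_one])
    rw [h2]; simp
  -- (red93 k)^4 = 1
  have hred4 : red93 ((k : GL (Fin 2) (ZMod 9)) ^ 4) = 1 := by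
    rw [_root_.map_pow]
    apply Units.ext
    rw [Units.val_pow_eq_pow_val, Units.val_one]
    rcases hNk with ⟨x', y', hxy, hm⟩ | ⟨x', y', hxy, hm⟩
    · rw [hm]; exact pow4_case1 x' y' hxy
    · rw [hm]; exact pow4_case2 x' y' hxy
  -- det(k^4) = 1
  have hdet4 : Matrix.det (((k : GL (Fin 2) (ZMod 9)) ^ 4 : GL (Fin 2) (ZMod 9)) :
      Matrix (Fin 2) (Fin 2) (ZMod 9)) = 1 := by
    rw [← Matrix.GeneralLinearGroup.val_det_apply, _root_.map_pow, hdetk, one_pow, Units.val_one]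
  -- entries of k^4
  set M : Matrix (Fin 2) (Fin 2) (ZMod 9) :=
    (((k : GL (Fin 2) (ZMod 9)) ^ 4 : GL (Fin 2) (ZMod 9)) : Matrix (Fin 2) (Fin 2) (ZMod 9))
    with hM
  have hmap : M.map f = 1 := by rw [← red93_val, hred4, Units.val_one]
  have h00 : f (M 0 0) = 1 := by
    have := congrFun (congrFun hmap 0) 0
    simpa [Matrix.map_apply, Matrix.one_apply] using this
  have h01 : f (M 0 1) = 0 := by
    have := congrFun (congrFun hmap 0) 1
    simpa [Matrix.map_apply, Matrix.one_apply] using this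
  have h10 : f (M 1 0) = 0 := by
    have := congrFun (congrFun hmap 1) 0
    simpa [Matrix.map_apply, Matrix.one_apply] using this
  have hdetM : M 0 0 * M 1 1 - M 0 1 * M 1 0 = 1 := by
    rw [← Matrix.det_fin_two]; exact hdet4
  obtain ⟨α, β, γ, ha, hb, hc, hd⟩ := decomp (M 0 0) (M 0 1) (M 1 0) (M 1 1) h00 h01 h10 hdetM
  -- k^4 = g3^α * g1^β * g2^γ
  have hk4 : k ^ 4 = g3 ^ (α : ℕ) * g1 ^ (β : ℕ) * g2 ^ (γ : ℕ) := by
    apply Subtype.ext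
    push_cast
    apply Units.ext
    rw [Units.val_mul, Units.val_mul, Units.val_pow_eq_pow_val, Units.val_pow_eq_pow_val,
      Units.val_pow_eq_pow_val, Units.val_pow_eq_pow_val]
    show M = _
    rw [Matrix.eta_fin_two M, ha, hb, hc, hd]
    exact prodmat α β γ
  have hχk4 : χ (k ^ 4) = 1 := by
    rw [hk4, _root_.map_mul, _root_.map_mul, _root_.map_pow, _root_.map_pow, _root_.map_pow, hχg1, hχg2, hχg3, one_pow, one_pow,
      one_pow, mul_one, mul_one]
  have hχk : χ k = 1 := key4 _ (by rw [← _root_.map_pow, hχk4])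
  -- conclude
  have hx : χ x = (χ u) ^ i * (χ v) ^ j := by
    have : χ k = χ x * ((χ u) ^ i)⁻¹ * ((χ v) ^ j)⁻¹ := by
      rw [hk, _root_.map_mul, _root_.map_mul, _root_.map_pow, _root_.map_pow, _root_.map_inv, _root_.map_inv, inv_pow, inv_pow]
    rw [hχk] at this
    have h2 : χ x * ((χ u) ^ i)⁻¹ * ((χ v) ^ j)⁻¹ = 1 := this.symm
    rw [mul_inv_eq_one] at h2
    rw [mul_inv_eq_iff_eq_mul] at h2
    rw [h2]
    exact mul_comm _ _
  have htoadd := congrArg Multiplicative.toAdd hx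
  rw [toAdd_mul, toAdd_pow, toAdd_pow] at htoadd
  have hcast : ∀ z : ZMod 3, ((z.val : ℕ) : ZMod 3) = z := fun z => ZMod.natCast_rightInverse z
  rw [htoadd]
  simp only [hi, hj, nsmul_eq_mul, hcast]
  ring
end
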